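/- Let R̄ be a commutative ring of characteristic p and S̄ a commutative R̄-algebra. Suppose (s(i))_{i∈I} is a family in W(S̄) which is a basis of W(S̄) as a W(R̄)-module, and suppose the family of zeroth coordinates (s(i)_0)_{i∈I} is R̄-linearly independent in S̄. Then S̄ is a relatively perfect R̄-algebra and (s(i)_0)_{i∈I} is an R̄-basis of S̄. -/

import Mathlib

open WittVector

/-- The `W(R)`-module structure on `W(S)` induced by the functorial map
`W(R) →+* W(S)` coming from the structure morphism `R → S`. -/
noncomputable instance wittModule (p : ℕ) [Fact p.Prime] (R S : Type*) [CommRing R]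
    [CommRing S] [Algebra R S] : Module (WittVector p R) (WittVector p S) :=
  Module.compHom (WittVector p S) (WittVector.map (algebraMap R S))

/-- `R` viewed as an `R`-module through the Frobenius endomorphism `a ↦ aᵖ`. -/
def FrobTwist (p : ℕ) (R : Type*) : Type _ := R

/-- The identity of `R`, viewed as a map `FrobTwist p R → R`. -/
def FrobTwist.val {p : ℕ} {R : Type*} (x : FrobTwist p R) : R := x

instance (p : ℕ) (R : Type*) [CommRing R] : AddCommGroup (FrobTwist p R) :=
  inferInstanceAs (AddCommGroup R)

noncomputable instance (p : ℕ) [Fact p.Prime] (R : Type*) [CommRing R] [CharP R p] :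
    Module R (FrobTwist p R) :=
  Module.compHom (R := R) R (frobenius R p)

/-- The relative Frobenius `S ⊗_{ψ, Frob_R} R → S`, `s ⊗ r ↦ s^p * ψ(r)`. -/
noncomputable def relativeFrobenius (p : ℕ) [Fact p.Prime] (R S : Type*) [CommRing R]
    [CommRing S] [Algebra R S] [CharP R p] [CharP S p] :
    TensorProduct R S (FrobTwist p R) →+ S :=
  TensorProduct.liftAddHom
    (AddMonoidHom.mk'
      (fun s => AddMonoidHom.mk' (fun r : FrobTwist p R => s ^ p * algebraMap R S r.val)
        (fun r r' => by
          show s ^ p * algebraMap R S (r.val + r'.val) = _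
          rw [map_add, mul_add]))
      (fun s t => by
        ext r
        show (s + t) ^ p * algebraMap R S r.val =
          s ^ p * algebraMap R S r.val + t ^ p * algebraMap R S r.val
        haveI : ExpChar S p := ExpChar.prime Fact.out
        rw [add_pow_char, add_mul]))
    (fun a s r => by
      show (a • s) ^ p * algebraMap R S r.val =
        s ^ p * algebraMap R S (frobenius R p a * r.val)
      rw [Algebra.smul_def, mul_pow, ← map_pow, map_mul, frobenius_def]
      ring)

/-- Pack an element of `R` into `FrobTwist p R`. -/
def FrobTwist.mk (p : ℕ) {R : Type*} (x : R) : FrobTwist p R := x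

section WittAux

variable {p : ℕ} [Fact p.Prime] {R : Type*} [CommRing R]

/-- The coordinate shift, a right inverse of Verschiebung on the kernel of `coeff 0`. -/
noncomputable def wittShift (x : WittVector p R) : WittVector p R :=
  WittVector.mk p fun n => x.coeff (n + 1)

theorem wittShift_coeff (x : WittVector p R) (n : ℕ) :
    (wittShift x).coeff n = x.coeff (n + 1) := rfl

theorem verschiebung_wittShift (x : WittVector p R) (h : x.coeff 0 = 0) :
    verschiebung (wittShift x) = x := by
  ext n
  cases n with
  | zero => rw [verschiebung_coeff_zero, h]
  | succ n => rw [verschiebung_coeff_succ, wittShift_coeff]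

theorem wittShift_zero : (wittShift (0 : WittVector p R)) = 0 := by
  ext n
  rw [wittShift_coeff, zero_coeff, zero_coeff]

theorem verschiebung_injective :
    Function.Injective (verschiebung : WittVector p R → WittVector p R) := by
  intro x y h
  ext n
  have h2 := congrArg (fun z : WittVector p R => z.coeff (n + 1)) h
  simpa only [verschiebung_coeff_add_one] using h2

end WittAux

/-- if a family `(s i)` in `W(S̄)` is a basis of `W(S̄)` as a
`W(R̄)`-module, and the zeroth coordinates `(s i).coeff 0` are `R̄`-linearly
independent, then `S̄` is relatively perfect over `R̄` and the zeroth coordinates form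
an `R̄`-basis of `S̄`. -/
theorem wittBasis_relativelyPerfect (p : ℕ) [Fact p.Prime] (R S : Type*)
    [CommRing R] [CommRing S] [Algebra R S] [CharP R p] [CharP S p]
    {I : Type*} (s : I → WittVector p S)
    (hli : LinearIndependent (WittVector p R) s)
    (hgen : Submodule.span (WittVector p R) (Set.range s) = ⊤)
    (hli0 : LinearIndependent R (fun i => (s i).coeff 0)) :
    Function.Bijective (relativeFrobenius p R S) ∧
      Submodule.span R (Set.range fun i => (s i).coeff 0) = ⊤ := by
  classical
  set φ : WittVector p R →+* WittVector p S := WittVector.map (algebraMap R S) with hφ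
  have hsmul : ∀ (a : WittVector p R) (x : WittVector p S), a • x = φ a * x :=
    fun _ _ => rfl
  -- the key projection formula in `•`-form
  have hvsmul : ∀ (c : WittVector p R) (y : WittVector p S),
      verschiebung (c • frobenius y) = (verschiebung c) • y := by
    intro c y
    rw [hsmul, hsmul, verschiebung_mul_frobenius, map_verschiebung]
  -- the basis given by `s`
  let B : Module.Basis I (WittVector p R) (WittVector p S) := Module.Basis.mk hli hgen.ge
  have hB : ⇑B = s := Module.Basis.coe_mk _ _
  have hBexp : ∀ x : WittVector p S, x = (B.repr x).sum fun j c => c • s j := by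
    intro x
    conv_lhs => rw [← B.linearCombination_repr x]
    rw [Finsupp.linearCombination_apply, hB]
  -- constant coefficient of a linear combination
  have hc0 : ∀ (l : I →₀ WittVector p R) (v : I → WittVector p S),
      (l.sum fun j c => c • v j).coeff 0 = l.sum fun j c => c.coeff 0 • (v j).coeff 0 := by
    intro l v
    have h1 := map_finsuppSum (constantCoeff : WittVector p S →+* S) l (fun j c => c • v j)
    simp only [constantCoeff_apply] at h1
    rw [h1]
    refine Finsupp.sum_congr fun j _ => ?_
    rw [hsmul, mul_coeff_zero, map_coeff, Algebra.smul_def]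
  -- coefficients of an element with vanishing constant coefficient
  have lemA : ∀ x : WittVector p S, x.coeff 0 = 0 → ∀ j, (B.repr x j).coeff 0 = 0 := by
    intro x hx j
    have h1 : Finsupp.linearCombination R (fun i => (s i).coeff 0)
        ((B.repr x).mapRange (fun c => c.coeff 0) (by simp)) = 0 := by
      rw [Finsupp.linearCombination_apply,
        Finsupp.sum_mapRange_index (h := fun j d => d • (s j).coeff 0)
          (fun j => zero_smul R _), ← hc0 (B.repr x) s, ← hBexp x, hx]
    have h2 := linearIndependent_iff.mp hli0 _ h1
    have h3 := DFunLike.congr_fun h2 j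
    simpa only [Finsupp.mapRange_apply, Finsupp.coe_zero, Pi.zero_apply] using h3
  -- normal form for elements with vanishing constant coefficient
  have hVrep : ∀ x : WittVector p S, x.coeff 0 = 0 →
      ∃ b : I →₀ WittVector p R, x = b.sum fun j c => (verschiebung c) • s j := by
    intro x hx
    refine ⟨(B.repr x).mapRange wittShift wittShift_zero, ?_⟩
    rw [Finsupp.sum_mapRange_index (fun a => by rw [map_zero, zero_smul])]
    conv_lhs => rw [hBexp x]
    exact Finsupp.sum_congr fun j _ => by rw [verschiebung_wittShift _ (lemA x hx j)]
  -- the family `frobenius ∘ s` is linearly independent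
  have hliF : LinearIndependent (WittVector p R) fun i => frobenius (s i) := by
    rw [linearIndependent_iff]
    intro l hl
    have h1 : Finsupp.linearCombination (WittVector p R) s
        (l.mapRange ⇑(verschiebung (p := p) (R := R)) (map_zero _)) = 0 := by
      rw [Finsupp.linearCombination_apply,
        Finsupp.sum_mapRange_index (h := fun i c => c • s i) (fun i => zero_smul _ _)]
      calc (l.sum fun i c => (verschiebung c) • s i)
          = l.sum fun i c => verschiebung (c • frobenius (s i)) :=
            Finsupp.sum_congr fun i _ => (hvsmul _ _).symm
        _ = verschiebung (l.sum fun i c => c • frobenius (s i)) :=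
            (map_finsuppSum _ _ _).symm
        _ = 0 := by
            rw [← Finsupp.linearCombination_apply, hl, map_zero]
    have h2 := linearIndependent_iff.mp hli _ h1
    refine Finsupp.ext fun i => ?_
    have h3 := DFunLike.congr_fun h2 i
    simp only [Finsupp.mapRange_apply, Finsupp.coe_zero, Pi.zero_apply] at h3
    simp only [Finsupp.coe_zero, Pi.zero_apply]
    exact verschiebung_injective (h3.trans (map_zero _).symm)
  -- the family `frobenius ∘ s` spans
  have hspanF : ⊤ ≤ Submodule.span (WittVector p R)
      (Set.range fun i => frobenius (s i)) := by
    rw [← hgen, Submodule.span_le]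
    rintro _ ⟨i, rfl⟩
    obtain ⟨b, hb⟩ := hVrep (verschiebung (s i)) (verschiebung_coeff_zero _)
    have h4 : verschiebung (s i) = verschiebung (b.sum fun j c => c • frobenius (s j)) := by
      rw [hb, map_finsuppSum]
      exact Finsupp.sum_congr fun j _ => (hvsmul _ _).symm
    have h5 := verschiebung_injective h4
    rw [SetLike.mem_coe, h5, Finsupp.sum]
    exact Submodule.sum_mem _ fun j _ =>
      Submodule.smul_mem _ _ (Submodule.subset_span ⟨j, rfl⟩)
  -- `frobenius ∘ s` is a basis
  let C : Module.Basis I (WittVector p R) (WittVector p S) := Module.Basis.mk hliF hspanF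
  have hC : ⇑C = fun i => frobenius (s i) := Module.Basis.coe_mk _ _
  have hCexp : ∀ x : WittVector p S, x = (C.repr x).sum fun j c => c • frobenius (s j) := by
    intro x
    conv_lhs => rw [← C.linearCombination_repr x]
    rw [Finsupp.linearCombination_apply, hC]
  -- the zeroth coordinates span `S`
  have hspanσ : Submodule.span R (Set.range fun i => (s i).coeff 0) = ⊤ := by
    rw [Submodule.eq_top_iff']
    intro x
    have h1 : x = ((B.repr (teichmuller p x)).sum fun j c => c.coeff 0 • (s j).coeff 0) := by
      rw [← hc0, ← hBexp, teichmuller_coeff_zero]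
    rw [h1, Finsupp.sum]
    exact Submodule.sum_mem _ fun j _ =>
      Submodule.smul_mem _ _ (Submodule.subset_span ⟨j, rfl⟩)
  -- the main lemma: any relation among the `(s i).coeff 0 ^ p` is trivial
  have main : ∀ r : I →₀ R,
      (r.sum fun i a => (s i).coeff 0 ^ p * algebraMap R S a) = 0 → r = 0 := by
    intro r hrel
    set l : I →₀ WittVector p R := r.mapRange (teichmuller p) (by simp) with hl
    set t : WittVector p S := l.sum fun j c => c • frobenius (s j) with htdef
    have htC : C.repr t = l := by
      have h1 : Finsupp.linearCombination (WittVector p R) ⇑C l = t := by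
        rw [Finsupp.linearCombination_apply, hC]
      rw [← h1, Module.Basis.repr_linearCombination]
    have ht0 : t.coeff 0 = 0 := by
      rw [htdef, hc0, hl, Finsupp.sum_mapRange_index
        (h := fun j (d : WittVector p R) => d.coeff 0 • (frobenius (s j)).coeff 0)
        (fun j => by simp)]
      rw [← hrel]
      refine Finsupp.sum_congr fun i _ => ?_
      rw [teichmuller_coeff_zero, coeff_frobenius_charP, Algebra.smul_def, mul_comm]
    have h3 : t = (C.repr (wittShift t)).sum fun j c => (verschiebung c) • s j := by
      conv_lhs => rw [← verschiebung_wittShift t ht0, hCexp (wittShift t), map_finsuppSum]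
      exact Finsupp.sum_congr fun j _ => hvsmul _ _
    have h4 : l = (C.repr (wittShift t)).sum fun j c => (verschiebung c) • C.repr (s j) := by
      rw [← htC]
      conv_lhs => rw [h3]
      rw [map_finsuppSum]
      exact Finsupp.sum_congr fun j _ => map_smul _ _ _
    refine Finsupp.ext fun k => ?_
    have h5 := DFunLike.congr_fun h4 k
    rw [hl, Finsupp.mapRange_apply, Finsupp.sum_apply] at h5
    have h7 : ((C.repr (wittShift t)).sum
        fun j c => ((verschiebung c) • C.repr (s j)) k).coeff 0 = 0 := by
      have h8 := map_finsuppSum (constantCoeff : WittVector p R →+* R)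
        (C.repr (wittShift t)) (fun j c => ((verschiebung c) • C.repr (s j)) k)
      simp only [constantCoeff_apply] at h8
      rw [h8, Finsupp.sum]
      refine Finset.sum_eq_zero fun j _ => ?_
      rw [Finsupp.smul_apply, smul_eq_mul, mul_coeff_zero, verschiebung_coeff_zero, zero_mul]
    have h9 : (teichmuller p (r k)).coeff 0 = 0 := by rw [h5]; exact h7
    rw [teichmuller_coeff_zero] at h9
    simpa using h9
  -- the value of the relative Frobenius on elementary tensors
  have hrF : ∀ (y : S) (a : R),
      relativeFrobenius p R S (y ⊗ₜ[R] FrobTwist.mk p a)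
        = y ^ p * algebraMap R S a := by
    intro y a
    unfold relativeFrobenius
    rw [TensorProduct.liftAddHom_tmul]
    rfl
  -- surjectivity
  have hsurj : Function.Surjective ⇑(relativeFrobenius p R S) := by
    intro x
    refine ⟨(C.repr (teichmuller p x)).sum
      (fun j c => (s j).coeff 0 ⊗ₜ[R] FrobTwist.mk p (c.coeff 0)), ?_⟩
    rw [map_finsuppSum]
    have h1 : x = ((C.repr (teichmuller p x)).sum
        fun j c => c.coeff 0 • (frobenius (s j)).coeff 0) := by
      rw [← hc0, ← hCexp, teichmuller_coeff_zero]
    conv_rhs => rw [h1]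
    refine Finsupp.sum_congr fun j _ => ?_
    rw [hrF, coeff_frobenius_charP, Algebra.smul_def]
    exact mul_comm _ _
  -- the basis of `S` given by the zeroth coordinates
  let Bσ : Module.Basis I R S := Module.Basis.mk hli0 hspanσ.ge
  have hBσ : ⇑Bσ = fun i => (s i).coeff 0 := Module.Basis.coe_mk _ _
  have hBσexp : ∀ y : S, y = (Bσ.repr y).sum fun i c => c • (s i).coeff 0 := by
    intro y
    conv_lhs => rw [← Bσ.linearCombination_repr y]
    rw [Finsupp.linearCombination_apply, hBσ]
  -- every element of the tensor product is a combination of `σ i ⊗ 1`-type tensors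
  have hrep : ∀ ξ : TensorProduct R S (FrobTwist p R), ∃ r : I →₀ R,
      ξ = r.sum fun i a => (s i).coeff 0 ⊗ₜ[R] FrobTwist.mk p a := by
    intro ξ
    induction ξ using TensorProduct.induction_on with
    | zero => exact ⟨0, Finsupp.sum_zero_index.symm⟩
    | tmul y n =>
      refine ⟨(Bσ.repr y).mapRange (fun c => frobenius R p c * FrobTwist.val n)
        (by simp), ?_⟩
      erw [Finsupp.sum_mapRange_index
        (h := fun i (a : R) => (s i).coeff 0 ⊗ₜ[R] FrobTwist.mk p a)
        (fun i => TensorProduct.tmul_zero (N := FrobTwist p R) _)]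
      conv_lhs => rw [hBσexp y]
      rw [Finsupp.sum, TensorProduct.sum_tmul, Finsupp.sum]
      refine Finset.sum_congr rfl fun i _ => ?_
      rw [TensorProduct.smul_tmul]
      rfl
    | add ξ₁ ξ₂ ih₁ ih₂ =>
      obtain ⟨r₁, rfl⟩ := ih₁
      obtain ⟨r₂, rfl⟩ := ih₂
      exact ⟨r₁ + r₂, (Finsupp.sum_add_index' (fun i => TensorProduct.tmul_zero (N := FrobTwist p R) _)
        (fun i b₁ b₂ => TensorProduct.tmul_add (N := FrobTwist p R) _ _ _)).symm⟩
  -- injectivity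
  have hinj : Function.Injective ⇑(relativeFrobenius p R S) := by
    rw [injective_iff_map_eq_zero]
    intro ξ hξ
    obtain ⟨r, rfl⟩ := hrep ξ
    rw [map_finsuppSum] at hξ
    have h1 : (r.sum fun i a => (s i).coeff 0 ^ p * algebraMap R S a) = 0 := by
      rw [← hξ]
      exact Finsupp.sum_congr fun i _ => (hrF _ _).symm
    rw [main r h1, Finsupp.sum_zero_index]
  exact ⟨⟨hinj, hsurj⟩, hspanσ⟩
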